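/- Let H be symmetric positive definite with decomposition H = D − L − Lᵀ (D block diagonal, L strictly lower block triangular), and let T be symmetric positive definite block diagonal with 2T⁻¹ − D ≻ 0. Then the matrix M = (T⁻¹ − L)⁻¹ (T⁻¹ − D + Lᵀ) has spectral radius ρ(M) < 1. -/

import Mathlib

open Matrix

/-- The spectral radius of a real matrix: the supremum of the absolute values of its
(complex) eigenvalues. -/
noncomputable def specRad {n : ℕ} (A : Matrix (Fin n) (Fin n) ℝ) : ℝ :=
  sSup ((fun z : ℂ => ‖z‖) '' spectrum ℂ (A.map (algebraMap ℝ ℂ)))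

noncomputable def cm {n : ℕ} (A : Matrix (Fin n) (Fin n) ℝ) : Matrix (Fin n) (Fin n) ℂ :=
  A.map (algebraMap ℝ ℂ)

lemma re_quad {n : ℕ} (A : Matrix (Fin n) (Fin n) ℝ) (x : Fin n → ℂ) :
    (star x ⬝ᵥ (cm A *ᵥ x)).re =
      (fun i => (x i).re) ⬝ᵥ (A *ᵥ fun i => (x i).re)
      + (fun i => (x i).im) ⬝ᵥ (A *ᵥ fun i => (x i).im) := by
  simp only [cm, dotProduct, mulVec, map_apply, Pi.star_apply, Complex.re_sum,
    Finset.mul_sum]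
  rw [← Finset.sum_add_distrib]
  refine Finset.sum_congr rfl fun j _ => ?_
  rw [← Finset.sum_add_distrib]
  refine Finset.sum_congr rfl fun k _ => ?_
  simp [Complex.mul_re, Complex.mul_im]

lemma star_quad {n : ℕ} (M : Matrix (Fin n) (Fin n) ℂ) (x : Fin n → ℂ) :
    star (star x ⬝ᵥ (M *ᵥ x)) = star x ⬝ᵥ (Mᴴ *ᵥ x) := by
  rw [star_dotProduct, star_star, star_mulVec, ← dotProduct_mulVec]

lemma cm_conjT {n : ℕ} (A : Matrix (Fin n) (Fin n) ℝ) : (cm A)ᴴ = cm Aᵀ := by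
  ext i j
  simp [cm, conjTranspose_apply, Complex.conj_ofReal]

lemma quad_pos {n : ℕ} {A : Matrix (Fin n) (Fin n) ℝ} (hA : A.PosDef)
    {x : Fin n → ℂ} (hx : x ≠ 0) :
    ∃ r : ℝ, 0 < r ∧ star x ⬝ᵥ (cm A *ᵥ x) = (r : ℂ) := by
  have hsym : Aᵀ = A := hA.1
  have hstar : star (star x ⬝ᵥ (cm A *ᵥ x)) = star x ⬝ᵥ (cm A *ᵥ x) := by
    rw [star_quad, cm_conjT, hsym]
  have him : (star x ⬝ᵥ (cm A *ᵥ x)).im = 0 := by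
    have := congrArg Complex.im hstar
    simp at this; linarith
  refine ⟨(star x ⬝ᵥ (cm A *ᵥ x)).re, ?_, (Complex.ext (by simp) (by simp [him])).symm⟩
  rw [re_quad]
  set u : Fin n → ℝ := fun i => (x i).re
  set v : Fin n → ℝ := fun i => (x i).im
  have huv : u ≠ 0 ∨ v ≠ 0 := by
    by_contra h
    push_neg at h
    apply hx
    funext i
    have h1 := congrFun h.1 i
    have h2 := congrFun h.2 i
    simpa [u, v, Complex.ext_iff] using ⟨h1, h2⟩
  have hu : (0:ℝ) ≤ u ⬝ᵥ (A *ᵥ u) := by simpa using hA.posSemidef.dotProduct_mulVec_nonneg u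
  have hv : (0:ℝ) ≤ v ⬝ᵥ (A *ᵥ v) := by simpa using hA.posSemidef.dotProduct_mulVec_nonneg v
  rcases huv with h | h
  · have := hA.dotProduct_mulVec_pos h; simp at this; linarith
  · have := hA.dotProduct_mulVec_pos h; simp at this; linarith

lemma exists_eigvec {n : ℕ} {A : Matrix (Fin n) (Fin n) ℂ} {μ : ℂ}
    (hμ : μ ∈ spectrum ℂ A) : ∃ x : Fin n → ℂ, x ≠ 0 ∧ A *ᵥ x = μ • x := by
  rw [← AlgEquiv.spectrum_eq (Matrix.toLinAlgEquiv' (R := ℂ) (n := Fin n)),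
    ← Module.End.hasEigenvalue_iff_mem_spectrum] at hμ
  obtain ⟨x, hx1, hx2⟩ := hμ.exists_hasEigenvector
  refine ⟨x, hx2, ?_⟩
  have h2 : Matrix.toLin' A x = μ • x := Module.End.mem_eigenspace_iff.mp hx1
  rwa [Matrix.toLin'_apply] at h2

lemma det_unit_of_posdef_sym_part {n : ℕ} {B : Matrix (Fin n) (Fin n) ℝ}
    (h : (B + Bᵀ).PosDef) : IsUnit B.det := by
  by_contra hdet
  rw [isUnit_iff_ne_zero, not_not] at hdet
  obtain ⟨v, hv0, hv⟩ := (Matrix.exists_mulVec_eq_zero_iff).mpr hdet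
  have hpos := h.dotProduct_mulVec_pos hv0
  rw [add_mulVec, dotProduct_add, hv] at hpos
  simp only [star_trivial, dotProduct_zero, zero_add] at hpos
  rw [mulVec_transpose, dotProduct_comm, ← dotProduct_mulVec, hv] at hpos
  simp at hpos

lemma abs_lt_one_calc {μ c : ℂ} {hr sr : ℝ} (hhr : 0 < hr) (hsr : 0 < sr)
    (hsum : c + (starRingEnd ℂ) c = ((sr + hr : ℝ) : ℂ))
    (heq : ((hr : ℝ) : ℂ) = (1 - μ) * c) : ‖μ‖ < 1 := by
  have hcre : 2 * c.re = sr + hr := by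
    have h1 := congrArg Complex.re hsum
    simp [Complex.add_re, Complex.conj_re] at h1
    linarith
  have hc0 : c ≠ 0 := by
    rintro rfl
    rw [mul_zero] at heq
    exact absurd (Complex.ofReal_eq_zero.mp heq) (ne_of_gt hhr)
  have hmc : μ * c = c - (hr : ℂ) := by
    have : c - μ * c = (hr : ℂ) := by rw [heq]; ring
    linear_combination -this
  have hns : Complex.normSq (c - (hr : ℂ)) < Complex.normSq c := by
    simp only [Complex.normSq_apply, Complex.sub_re, Complex.sub_im, Complex.ofReal_re,
      Complex.ofReal_im]
    nlinarith [sq_nonneg c.im]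
  have habs : ‖c - (hr : ℂ)‖ < ‖c‖ := by
    have h1 : (‖c - (hr:ℂ)‖)^2 < (‖c‖)^2 := by
      rwa [Complex.sq_norm, Complex.sq_norm]
    exact lt_of_pow_lt_pow_left₀ 2 (norm_nonneg c) h1
  have hcpos : 0 < ‖c‖ := by
    simpa [AbsoluteValue.pos_iff] using hc0
  have : ‖μ‖ * ‖c‖ < 1 * ‖c‖ := by
    rw [← norm_mul, hmc, one_mul]; exact habs
  exact lt_of_mul_lt_mul_right this (le_of_lt hcpos)

lemma key_spec {n : ℕ} (B H : Matrix (Fin n) (Fin n) ℝ) (hH : H.PosDef)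
    (hS : (B + Bᵀ - H).PosDef) {μ : ℂ}
    (hμ : μ ∈ spectrum ℂ (cm (B⁻¹ * (B - H)))) : ‖μ‖ < 1 := by
  have hBpd : (B + Bᵀ).PosDef := by
    have := hS.add_posSemidef hH.posSemidef
    simpa using this
  have hdet := det_unit_of_posdef_sym_part hBpd
  obtain ⟨x, hx0, hx⟩ := exists_eigvec hμ
  have hmap : cm B * cm (B⁻¹ * (B - H)) = cm (B - H) := by
    rw [cm, cm, cm, ← Matrix.map_mul, ← Matrix.mul_assoc,
      Matrix.mul_nonsing_inv _ hdet, Matrix.one_mul]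
  have key1 : cm (B - H) *ᵥ x = μ • (cm B *ᵥ x) := by
    rw [← hmap, ← mulVec_mulVec, hx, mulVec_smul]
  have hsub : cm (B - H) = cm B - cm H := by
    simp [cm, Matrix.map_sub]
  have key2 : cm H *ᵥ x = (1 - μ) • (cm B *ᵥ x) := by
    rw [hsub, sub_mulVec] at key1
    rw [sub_smul, one_smul, ← key1]
    abel
  obtain ⟨hr, hhr, hHq⟩ := quad_pos hH hx0
  obtain ⟨sr, hsr, hSq⟩ := quad_pos hS hx0
  set c : ℂ := star x ⬝ᵥ (cm B *ᵥ x) with hc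
  have heq : ((hr : ℝ) : ℂ) = (1 - μ) * c := by
    rw [← hHq, key2, dotProduct_smul, smul_eq_mul]
  have hstc : (starRingEnd ℂ) c = star x ⬝ᵥ (cm Bᵀ *ᵥ x) := by
    rw [hc]
    rw [show (starRingEnd ℂ) (star x ⬝ᵥ (cm B *ᵥ x)) = star (star x ⬝ᵥ (cm B *ᵥ x)) from rfl,
      star_quad, cm_conjT]
  have hsum : c + (starRingEnd ℂ) c = ((sr + hr : ℝ) : ℂ) := by
    rw [hstc, hc, ← dotProduct_add, ← add_mulVec]
    have : cm B + cm Bᵀ = cm (B + Bᵀ - H) + cm H := by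
      simp [cm, Matrix.map_sub, Matrix.map_add]
    rw [this, add_mulVec, dotProduct_add, hHq, hSq, Complex.ofReal_add]
  exact abs_lt_one_calc hhr hsr hsum heq

theorem stmt9 {n q : ℕ} (blk : Fin n → Fin q)
    (H D L T : Matrix (Fin n) (Fin n) ℝ)
    (hH : H.PosDef)
    (hdecomp : H = D - L - Lᵀ)
    (hDblk : ∀ j k, blk j ≠ blk k → D j k = 0)
    (hLlow : ∀ j k, ¬ blk k < blk j → L j k = 0)
    (hT : T.PosDef)
    (hTblk : ∀ j k, blk j ≠ blk k → T j k = 0)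
    (hOR : ((2 : ℝ) • T⁻¹ - D).PosDef) :
    specRad ((T⁻¹ - L)⁻¹ * (T⁻¹ - D + Lᵀ)) < 1 := by
  unfold specRad
  set B : Matrix (Fin n) (Fin n) ℝ := T⁻¹ - L with hB
  have hTsym : Tᵀ = T := hT.1
  have hTinvT : (T⁻¹)ᵀ = T⁻¹ := by rw [Matrix.transpose_nonsing_inv, hTsym]
  have hBH : T⁻¹ - D + Lᵀ = B - H := by rw [hB, hdecomp]; abel
  have hS : (B + Bᵀ - H).PosDef := by
    have : B + Bᵀ - H = (2 : ℝ) • T⁻¹ - D := by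
      rw [hB, Matrix.transpose_sub, hTinvT, hdecomp]
      module
    rw [this]; exact hOR
  have hfin : ((fun z : ℂ => ‖z‖) '' spectrum ℂ
      (cm (B⁻¹ * (B - H)))).Finite :=
    (Matrix.finite_spectrum _).image _
  rw [hBH]
  show sSup ((fun z : ℂ => ‖z‖) '' spectrum ℂ (cm (B⁻¹ * (B - H)))) < 1
  rcases ((fun z : ℂ => ‖z‖) '' spectrum ℂ (cm (B⁻¹ * (B - H)))).eq_empty_or_nonempty with he | hne
  · rw [he, Real.sSup_empty]; norm_num
  · rw [hfin.csSup_lt_iff hne]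
    rintro r ⟨μ, hμ, rfl⟩
    exact key_spec B H hH hS hμ
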